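/- Let n, m be positive naturals, let Q : Matrix (Fin n) (Fin n) ℝ be symmetric positive definite, let K : Matrix (Fin m) (Fin n) ℝ, and let c > 0. For every η : Fin n → ℝ with η ⬝ᵥ (Q⁻¹ *ᵥ η) ≤ 1/c, there exists y : Fin m → ℝ with ‖y‖ ≤ 1/√c such that K *ᵥ η = T *ᵥ y, where T is the positive semidefinite square root of the positive semidefinite matrix K·Q·Kᵀ. -/

import Mathlib

open Matrix

/-- Moving a matrix across a dot product. -/
lemma mulVec_dotProduct_eq {a b : ℕ} (A : Matrix (Fin a) (Fin b) ℝ)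
    (x : Fin b → ℝ) (v : Fin a → ℝ) :
    (A *ᵥ x) ⬝ᵥ v = x ⬝ᵥ (Aᵀ *ᵥ v) := by
  simp only [dotProduct, Matrix.mulVec, Matrix.transpose_apply,
    dotProduct, Finset.sum_mul, Finset.mul_sum]
  rw [Finset.sum_comm]
  exact Finset.sum_congr rfl fun i _ => Finset.sum_congr rfl fun j _ => by ring

/-- Range of `M * Mᵀ` equals range of `M` for real matrices. -/
lemma range_mul_transpose_eq {m n : ℕ} (M : Matrix (Fin m) (Fin n) ℝ) :
    LinearMap.range (M * Mᵀ).mulVecLin = LinearMap.range M.mulVecLin := by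
  apply Submodule.eq_of_le_of_finrank_eq
  · rw [Matrix.mulVecLin_mul]
    exact LinearMap.range_comp_le_range _ _
  · exact Matrix.rank_self_mul_transpose M

/-- With the linear feedback `ξ = Kη`, membership `η ∈ E_c = {η : ηᵀQ⁻¹η ≤ 1/c}`
implies `Kη` lies in the input funnel
`E_u = {(KQKᵀ)^{1/2} y : ‖y‖ ≤ 1/√c}`. -/
theorem input_funnel_membership
    (n m : ℕ) (hn : 0 < n) (hm : 0 < m)
    (Q : Matrix (Fin n) (Fin n) ℝ) (hQ : Q.PosDef)
    (K : Matrix (Fin m) (Fin n) ℝ)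
    (c : ℝ) (hc : 0 < c)
    (T : Matrix (Fin m) (Fin m) ℝ) (hT : T.PosSemidef)
    (hT2 : T * T = K * Q * Kᵀ) :
    ∀ η : Fin n → ℝ, η ⬝ᵥ (Q⁻¹ *ᵥ η) ≤ 1 / c →
      ∃ y : Fin m → ℝ,
        Real.sqrt (y ⬝ᵥ y) ≤ 1 / Real.sqrt c ∧ K *ᵥ η = T *ᵥ y := by
  intro η hη
  set S := (open scoped MatrixOrder in CFC.sqrt Q) with hSdef
  have hS : S.PosSemidef := by
    open scoped MatrixOrder in exact Matrix.nonneg_iff_posSemidef.mp (CFC.sqrt_nonneg Q)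
  have hSS : S * S = Q := by
    open scoped MatrixOrder in
    exact CFC.sqrt_mul_sqrt_self Q (Matrix.nonneg_iff_posSemidef.mpr hQ.posSemidef)
  have hSsym : Sᵀ = S := by
    have := hS.1
    rwa [Matrix.IsHermitian, conjTranspose_eq_transpose_of_trivial] at this
  have hdet : IsUnit S.det := by
    have hQdet : Q.det ≠ 0 := hQ.det_pos.ne'
    have : S.det * S.det = Q.det := by rw [← Matrix.det_mul, hSS]
    exact isUnit_iff_ne_zero.mpr (fun h => hQdet (by rw [← this, h, zero_mul]))
  have hSinv : S * S⁻¹ = 1 := Matrix.mul_nonsing_inv S hdet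
  set z := S⁻¹ *ᵥ η with hz
  have hηz : η = S *ᵥ z := by
    rw [hz, Matrix.mulVec_mulVec, hSinv, Matrix.one_mulVec]
  have hQinv : Q⁻¹ = S⁻¹ * S⁻¹ := by rw [← hSS, Matrix.mul_inv_rev]
  have hSinvsym : S⁻¹ᵀ = S⁻¹ := by rw [Matrix.transpose_nonsing_inv, hSsym]
  have hzz : η ⬝ᵥ (Q⁻¹ *ᵥ η) = z ⬝ᵥ z := by
    rw [hQinv, ← Matrix.mulVec_mulVec, ← hz, dotProduct_comm,
      mulVec_dotProduct_eq, hSinvsym, ← hz]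
  set M := K * S with hM
  have hKη : K *ᵥ η = M *ᵥ z := by
    rw [hM, ← Matrix.mulVec_mulVec, ← hηz]
  have hmem : K *ᵥ η ∈ LinearMap.range M.mulVecLin := ⟨z, hKη.symm⟩
  rw [← range_mul_transpose_eq] at hmem
  have hMMT : M * Mᵀ = T * T := by
    rw [hM, hT2, Matrix.transpose_mul, hSsym, Matrix.mul_assoc, ← Matrix.mul_assoc S S Kᵀ,
      hSS, Matrix.mul_assoc]
  obtain ⟨w, hw⟩ := hmem
  rw [Matrix.mulVecLin_apply, hMMT] at hw
  have hTsym : Tᵀ = T := by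
    have := hT.1
    rwa [Matrix.IsHermitian, conjTranspose_eq_transpose_of_trivial] at this
  refine ⟨T *ᵥ w, ?_, by rw [Matrix.mulVec_mulVec, hw]⟩
  -- norm bound
  have h1 : (T *ᵥ w) ⬝ᵥ (T *ᵥ w) = z ⬝ᵥ (Mᵀ *ᵥ w) := by
    rw [mulVec_dotProduct_eq, hTsym, Matrix.mulVec_mulVec, hw, hKη,
      dotProduct_comm, mulVec_dotProduct_eq]
  have h2 : (Mᵀ *ᵥ w) ⬝ᵥ (Mᵀ *ᵥ w) = (T *ᵥ w) ⬝ᵥ (T *ᵥ w) := by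
    rw [mulVec_dotProduct_eq, Matrix.transpose_transpose, Matrix.mulVec_mulVec, hMMT,
      mulVec_dotProduct_eq T w (T *ᵥ w), hTsym, Matrix.mulVec_mulVec]
  have hCS : (z ⬝ᵥ (Mᵀ *ᵥ w)) ^ 2 ≤ (z ⬝ᵥ z) * ((Mᵀ *ᵥ w) ⬝ᵥ (Mᵀ *ᵥ w)) := by
    simpa [dotProduct, sq] using
      Finset.sum_mul_sq_le_sq_mul_sq Finset.univ z (Mᵀ *ᵥ w)
  have hynn : 0 ≤ (T *ᵥ w) ⬝ᵥ (T *ᵥ w) :=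
    Finset.sum_nonneg fun i _ => mul_self_nonneg _
  have hznn : 0 ≤ z ⬝ᵥ z := Finset.sum_nonneg fun i _ => mul_self_nonneg _
  have key : (T *ᵥ w) ⬝ᵥ (T *ᵥ w) ≤ z ⬝ᵥ z := by
    rw [← h1, h2] at hCS
    nlinarith [hCS, hynn, hznn]
  have hle : (T *ᵥ w) ⬝ᵥ (T *ᵥ w) ≤ 1 / c := le_trans key (hzz ▸ hη)
  calc Real.sqrt ((T *ᵥ w) ⬝ᵥ (T *ᵥ w)) ≤ Real.sqrt (1 / c) := Real.sqrt_le_sqrt hle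
    _ = 1 / Real.sqrt c := by rw [one_div, Real.sqrt_inv, one_div]
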